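/- For any positive integers n and k and any integer i with 1 ≤ i ≤ n−k, the coefficient a_{n,k}^{(i)} of z^i in JS_n^k(z) equals the number of ordered pairs (Q₁, Q₂) of simply hooked k-quasi-permutations of [n] satisfying Q₁⁻ = Q₂⁻, |Q₁⁻| = |Q₂⁻| = i, and pr_y(Q₁) = pr_y(Q₂). -/

import Mathlib

open Polynomial

/-- The Jacobi-Stirling numbers of the second kind `JS n k` as polynomials in `z`. -/
noncomputable def JS : ℕ → ℕ → Polynomial ℤ
  | 0, 0 => 1
  | 0, _ + 1 => 0
  | _ + 1, 0 => 0
  | n + 1, k + 1 => JS n k + C ((k : ℤ) + 1) * (C ((k : ℤ) + 1) + X) * JS n (k + 1)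

/-- The supdiagonal part `Q⁺` of `Q ⊆ [n] × [n]`. -/
def Qsup {n : ℕ} (Q : Finset (Fin n × Fin n)) : Finset (Fin n × Fin n) :=
  Q.filter fun p => p.1 ≤ p.2

/-- The subdiagonal part `Q⁻` of `Q ⊆ [n] × [n]`. -/
def Qsub {n : ℕ} (Q : Finset (Fin n × Fin n)) : Finset (Fin n × Fin n) :=
  Q.filter fun p => p.2 ≤ p.1

/-- The projection `pr_x` on the first coordinates. -/
def prX {n : ℕ} (Q : Finset (Fin n × Fin n)) : Finset (Fin n) := Q.image Prod.fst

/-- The projection `pr_y` on the second coordinates. -/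
def prY {n : ℕ} (Q : Finset (Fin n × Fin n)) : Finset (Fin n) := Q.image Prod.snd

/-- `Q` is a simply hooked `k`-quasi-permutation of `[n]`: it is contained in the diagram of
some permutation of `[n]`, has `n - k` elements, and `pr_x(Q⁻) ∩ pr_y(Q⁺) = ∅`. -/
def IsSHQP (n k : ℕ) (Q : Finset (Fin n × Fin n)) : Prop :=
  (∃ σ : Equiv.Perm (Fin n), ∀ p ∈ Q, σ p.1 = p.2) ∧
  Q.card = n - k ∧
  prX (Qsub Q) ∩ prY (Qsup Q) = ∅


open Finset in
/-- placeholder to open namespaces for the auxiliary development -/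
lemma _auxopen : True := trivial

open Finset

/-- ℕ-world analogues. -/
def QsupN (Q : Finset (ℕ × ℕ)) : Finset (ℕ × ℕ) := Q.filter fun p => p.1 ≤ p.2
def QsubN (Q : Finset (ℕ × ℕ)) : Finset (ℕ × ℕ) := Q.filter fun p => p.2 ≤ p.1
def prXN (Q : Finset (ℕ × ℕ)) : Finset ℕ := Q.image Prod.fst
def prYN (Q : Finset (ℕ × ℕ)) : Finset ℕ := Q.image Prod.snd

def SHQP (n k : ℕ) (Q : Finset (ℕ × ℕ)) : Prop :=
  (∀ p ∈ Q, p.1 < n ∧ p.2 < n) ∧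
  (∀ p ∈ Q, ∀ q ∈ Q, p.1 = q.1 → p = q) ∧
  (∀ p ∈ Q, ∀ q ∈ Q, p.2 = q.2 → p = q) ∧
  Q.card = n - k ∧
  prXN (QsubN Q) ∩ prYN (QsupN Q) = ∅

instance (n k : ℕ) (Q : Finset (ℕ × ℕ)) : Decidable (SHQP n k Q) := by
  unfold SHQP; infer_instance

def PairCond (n k i : ℕ) (QQ : Finset (ℕ × ℕ) × Finset (ℕ × ℕ)) : Prop :=
  SHQP n k QQ.1 ∧ SHQP n k QQ.2 ∧ QsubN QQ.1 = QsubN QQ.2 ∧ (QsubN QQ.1).card = i ∧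
  prYN QQ.1 = prYN QQ.2

instance (n k i : ℕ) (QQ : Finset (ℕ × ℕ) × Finset (ℕ × ℕ)) : Decidable (PairCond n k i QQ) := by
  unfold PairCond; infer_instance

def gset (n k i : ℕ) : Finset (Finset (ℕ × ℕ) × Finset (ℕ × ℕ)) :=
  ((range n ×ˢ range n).powerset ×ˢ (range n ×ˢ range n).powerset).filter (PairCond n k i)

def gcard (n k i : ℕ) : ℕ := (gset n k i).card

lemma mem_prXN {Q : Finset (ℕ × ℕ)} {a : ℕ} : a ∈ prXN Q ↔ ∃ b, (a, b) ∈ Q := by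
  simp [prXN]

lemma mem_prYN {Q : Finset (ℕ × ℕ)} {b : ℕ} : b ∈ prYN Q ↔ ∃ a, (a, b) ∈ Q := by
  simp [prYN]

lemma mem_QsubN {Q : Finset (ℕ × ℕ)} {p : ℕ × ℕ} : p ∈ QsubN Q ↔ p ∈ Q ∧ p.2 ≤ p.1 := by
  simp [QsubN]

lemma mem_QsupN {Q : Finset (ℕ × ℕ)} {p : ℕ × ℕ} : p ∈ QsupN Q ↔ p ∈ Q ∧ p.1 ≤ p.2 := by
  simp [QsupN]

lemma mem_gset {n k i : ℕ} {QQ : Finset (ℕ × ℕ) × Finset (ℕ × ℕ)} :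
    QQ ∈ gset n k i ↔ PairCond n k i QQ := by
  simp only [gset, mem_filter, mem_product, mem_powerset, and_iff_right_iff_imp]
  intro h
  constructor
  · intro p hp
    have := h.1.1 p hp
    simp [Finset.mem_product, Finset.mem_range]
    exact this
  · intro p hp
    have := h.2.1.1 p hp
    simp [Finset.mem_product, Finset.mem_range]
    exact this

/-- hook: no common element. -/
lemma hook_not {n k : ℕ} {Q : Finset (ℕ × ℕ)} (h : SHQP n k Q) {a : ℕ}
    (h1 : a ∈ prXN (QsubN Q)) (h2 : a ∈ prYN (QsupN Q)) : False := by
  have := h.2.2.2.2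
  have : a ∈ prXN (QsubN Q) ∩ prYN (QsupN Q) := Finset.mem_inter.2 ⟨h1, h2⟩
  rw [h.2.2.2.2] at this
  exact absurd this (Finset.notMem_empty a)

lemma no_fixed {n k : ℕ} {Q : Finset (ℕ × ℕ)} (h : SHQP n k Q) {a : ℕ} : (a, a) ∉ Q := by
  intro hmem
  exact hook_not h (mem_prXN.2 ⟨a, mem_QsubN.2 ⟨hmem, le_refl a⟩⟩)
    (mem_prYN.2 ⟨a, mem_QsupN.2 ⟨hmem, le_refl a⟩⟩)

lemma prXN_card {Q : Finset (ℕ × ℕ)} (h : ∀ p ∈ Q, ∀ q ∈ Q, p.1 = q.1 → p = q) :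
    (prXN Q).card = Q.card := by
  apply Finset.card_image_of_injOn
  intro p hp q hq hpq
  exact h p hp q hq hpq

lemma prYN_card {Q : Finset (ℕ × ℕ)} (h : ∀ p ∈ Q, ∀ q ∈ Q, p.2 = q.2 → p = q) :
    (prYN Q).card = Q.card := by
  apply Finset.card_image_of_injOn
  intro p hp q hq hpq
  exact h p hp q hq hpq

lemma prXN_subset_range {n k : ℕ} {Q : Finset (ℕ × ℕ)} (h : SHQP n k Q) :
    prXN Q ⊆ Finset.range n := by
  intro a ha
  obtain ⟨b, hb⟩ := mem_prXN.1 ha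
  exact Finset.mem_range.2 (h.1 _ hb).1

lemma prYN_subset_range {n k : ℕ} {Q : Finset (ℕ × ℕ)} (h : SHQP n k Q) :
    prYN Q ⊆ Finset.range n := by
  intro a ha
  obtain ⟨b, hb⟩ := mem_prYN.1 ha
  exact Finset.mem_range.2 (h.1 _ hb).2

/-- if `k ≥ n`, the only SHQP is empty, so the count is `[i = 0]`. -/
lemma gcard_of_ge {n k : ℕ} (h : n ≤ k) (i : ℕ) : gcard n k i = if i = 0 then 1 else 0 := by
  have hQ : ∀ Q : Finset (ℕ × ℕ), SHQP n k Q → Q = ∅ := by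
    intro Q hS
    have := hS.2.2.2.1
    rw [Nat.sub_eq_zero_of_le h] at this
    exact Finset.card_eq_zero.1 this
  rcases Nat.eq_zero_or_pos i with rfl | hi
  · simp only [gcard, if_true, eq_self_iff_true]
    rw [Finset.card_eq_one]
    refine ⟨(∅, ∅), ?_⟩
    apply Finset.eq_singleton_iff_unique_mem.2
    constructor
    · rw [mem_gset]
      refine ⟨?_, ?_, rfl, ?_, rfl⟩ <;>
        simp [SHQP, QsubN, QsupN, prXN, prYN, Nat.sub_eq_zero_of_le h]
    · intro QQ hQQ
      rw [mem_gset] at hQQ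
      have h1 := hQ _ hQQ.1
      have h2 := hQ _ hQQ.2.1
      exact Prod.ext h1 h2
  · rw [if_neg (Nat.ne_zero_of_lt hi)]
    unfold gcard
    rw [Finset.card_eq_zero]
    apply Finset.eq_empty_of_forall_notMem
    intro QQ hQQ
    rw [mem_gset] at hQQ
    have h1 := hQ _ hQQ.1
    have hc := hQQ.2.2.2.1
    rw [h1] at hc
    simp [QsubN] at hc
    omega

lemma not_SHQP_zero {n : ℕ} (hn : 1 ≤ n) (Q : Finset (ℕ × ℕ)) : ¬ SHQP n 0 Q := by
  intro h
  have hcard : Q.card = n := by simpa using h.2.2.2.1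
  have hX : prXN Q = Finset.range n := by
    apply Finset.eq_of_subset_of_card_le (prXN_subset_range h)
    rw [prXN_card h.2.1, hcard, Finset.card_range]
  have hY : prYN Q = Finset.range n := by
    apply Finset.eq_of_subset_of_card_le (prYN_subset_range h)
    rw [prYN_card h.2.2.1, hcard, Finset.card_range]
  have hx : (n - 1) ∈ prXN Q := by rw [hX]; exact Finset.mem_range.2 (by omega)
  have hy : (n - 1) ∈ prYN Q := by rw [hY]; exact Finset.mem_range.2 (by omega)
  obtain ⟨b, hb⟩ := mem_prXN.1 hx
  obtain ⟨a, ha⟩ := mem_prYN.1 hy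
  have hbn : b < n := (h.1 _ hb).2
  have han : a < n := (h.1 _ ha).1
  have hb' : b ≤ n - 1 := by omega
  have ha' : a ≤ n - 1 := by omega
  have hbne : b ≠ n - 1 := fun hc => no_fixed h (hc ▸ hb)
  have hane : a ≠ n - 1 := fun hc => no_fixed h (hc ▸ ha)
  exact hook_not h (mem_prXN.2 ⟨b, mem_QsubN.2 ⟨hb, hb'⟩⟩)
    (mem_prYN.2 ⟨a, mem_QsupN.2 ⟨ha, ha'⟩⟩)

lemma gcard_zero {n : ℕ} (hn : 1 ≤ n) (i : ℕ) : gcard n 0 i = 0 := by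
  unfold gcard
  rw [Finset.card_eq_zero]
  apply Finset.eq_empty_of_forall_notMem
  intro QQ hQQ
  exact not_SHQP_zero hn QQ.1 (mem_gset.1 hQQ).1

lemma hook_of_subset {Q' Q : Finset (ℕ × ℕ)} (hsub : Q' ⊆ Q)
    (h : prXN (QsubN Q) ∩ prYN (QsupN Q) = ∅) : prXN (QsubN Q') ∩ prYN (QsupN Q') = ∅ := by
  rw [Finset.eq_empty_iff_forall_notMem] at h ⊢
  intro a ha
  rw [Finset.mem_inter] at ha
  obtain ⟨b, hb⟩ := mem_prXN.1 ha.1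
  obtain ⟨c, hc⟩ := mem_prYN.1 ha.2
  rw [mem_QsubN] at hb; rw [mem_QsupN] at hc
  exact h a (Finset.mem_inter.2 ⟨mem_prXN.2 ⟨b, mem_QsubN.2 ⟨hsub hb.1, hb.2⟩⟩,
    mem_prYN.2 ⟨c, mem_QsupN.2 ⟨hsub hc.1, hc.2⟩⟩⟩)

lemma bound_notmem {n k : ℕ} {Q : Finset (ℕ × ℕ)} (h : SHQP n k Q) (p : ℕ × ℕ)
    (hp : n ≤ p.1 ∨ n ≤ p.2) : p ∉ Q := by
  intro hmem
  have := h.1 p hmem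
  omega

/-- In an SHQP of `[n+1]`, a pair `(n, y)` is strictly subdiagonal. -/
lemma max_sub {n k : ℕ} {Q : Finset (ℕ × ℕ)} (h : SHQP (n+1) k Q) {y : ℕ}
    (hy : (n, y) ∈ Q) : y < n ∧ (n, y) ∈ QsubN Q := by
  have hb := (h.1 _ hy).2
  have hne : y ≠ n := by
    intro hc; subst hc; exact no_fixed h hy
  exact ⟨by omega, mem_QsubN.2 ⟨hy, by simp; omega⟩⟩

lemma max_sup {n k : ℕ} {Q : Finset (ℕ × ℕ)} (h : SHQP (n+1) k Q) {x : ℕ}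
    (hx : (x, n) ∈ Q) : x < n ∧ (x, n) ∈ QsupN Q := by
  have hb := (h.1 _ hx).1
  have hne : x ≠ n := by
    intro hc; subst hc; exact no_fixed h hx
  exact ⟨by omega, mem_QsupN.2 ⟨hx, by simp; omega⟩⟩

/-- The max element cannot be both an `x`-coordinate and a `y`-coordinate. -/
lemma not_both_max {n k : ℕ} {Q : Finset (ℕ × ℕ)} (h : SHQP (n+1) k Q)
    (h1 : n ∈ prXN Q) (h2 : n ∈ prYN Q) : False := by
  obtain ⟨y, hy⟩ := mem_prXN.1 h1
  obtain ⟨x, hx⟩ := mem_prYN.1 h2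
  exact hook_not h (mem_prXN.2 ⟨y, (max_sub h hy).2⟩) (mem_prYN.2 ⟨x, (max_sup h hx).2⟩)

/-- Transfer of max-involvement from `Q₁` to `Q₂` in a pair. -/
lemma prX_transfer {n k i : ℕ} {QQ : Finset (ℕ × ℕ) × Finset (ℕ × ℕ)}
    (h : PairCond (n+1) k i QQ) (h1 : n ∈ prXN QQ.1) : n ∈ prXN QQ.2 := by
  obtain ⟨y, hy⟩ := mem_prXN.1 h1
  have := (max_sub h.1 hy).2
  rw [h.2.2.1] at this
  exact mem_prXN.2 ⟨y, (mem_QsubN.1 this).1⟩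

lemma prX_transfer' {n k i : ℕ} {QQ : Finset (ℕ × ℕ) × Finset (ℕ × ℕ)}
    (h : PairCond (n+1) k i QQ) (h1 : n ∈ prXN QQ.2) : n ∈ prXN QQ.1 := by
  obtain ⟨y, hy⟩ := mem_prXN.1 h1
  have := (max_sub h.2.1 hy).2
  rw [← h.2.2.1] at this
  exact mem_prXN.2 ⟨y, (mem_QsubN.1 this).1⟩

lemma SHQP_up {n k : ℕ} {Q : Finset (ℕ × ℕ)} (h : SHQP n k Q) : SHQP (n+1) (k+1) Q := by
  obtain ⟨hb, hx, hy, hc, hh⟩ := h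
  exact ⟨fun p hp => ⟨by have := (hb p hp).1; omega, by have := (hb p hp).2; omega⟩,
    hx, hy, by rw [hc]; omega, hh⟩

lemma SHQP_down {n k : ℕ} {Q : Finset (ℕ × ℕ)} (h : SHQP (n+1) (k+1) Q)
    (h1 : n ∉ prXN Q) (h2 : n ∉ prYN Q) : SHQP n k Q := by
  obtain ⟨hb, hx, hy, hc, hh⟩ := h
  refine ⟨fun p hp => ⟨?_, ?_⟩, hx, hy, by rw [hc]; omega, hh⟩
  · have := (hb p hp).1
    have : p.1 ≠ n := fun hc' => h1 (mem_prXN.2 ⟨p.2, by rw [← hc']; exact hp⟩)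
    omega
  · have := (hb p hp).2
    have : p.2 ≠ n := fun hc' => h2 (mem_prYN.2 ⟨p.1, by rw [← hc']; exact hp⟩)
    omega

/-- Inserting `(n, y)` (a subdiagonal pair at the new max). -/
lemma insertX {n k : ℕ} {Q : Finset (ℕ × ℕ)} {y : ℕ} (h : SHQP n (k+1) Q)
    (hyn : y < n) (hyQ : y ∉ prYN Q) (hkn : k + 1 ≤ n) :
    SHQP (n+1) (k+1) (insert (n, y) Q) ∧
    QsubN (insert (n, y) Q) = insert (n, y) (QsubN Q) ∧
    prYN (insert (n, y) Q) = insert y (prYN Q) ∧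
    n ∈ prXN (insert (n, y) Q) ∧
    (insert (n, y) Q).filter (fun p => p.1 ≠ n) = Q := by
  have hnQ : (n, y) ∉ Q := bound_notmem h (n, y) (Or.inl le_rfl)
  have hQsub : QsubN (insert (n, y) Q) = insert (n, y) (QsubN Q) := by
    unfold QsubN
    rw [Finset.filter_insert, if_pos (by simp; omega)]
  have hQsup : QsupN (insert (n, y) Q) = QsupN Q := by
    unfold QsupN
    rw [Finset.filter_insert, if_neg (by simp; omega)]
  refine ⟨⟨?_, ?_, ?_, ?_, ?_⟩, hQsub, ?_, ?_, ?_⟩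
  · intro p hp
    rcases Finset.mem_insert.1 hp with rfl | hp'
    · simp; omega
    · have := h.1 p hp'; omega
  · rintro ⟨pa, pb⟩ hp ⟨qa, qb⟩ hq hpq
    simp only [Prod.fst] at hpq
    subst hpq
    rcases Finset.mem_insert.1 hp with heq | hp'
    · rcases Finset.mem_insert.1 hq with heq' | hq'
      · rw [heq, heq']
      · exfalso
        have := (h.1 _ hq').1
        simp only [Prod.mk.injEq] at heq
        omega
    · rcases Finset.mem_insert.1 hq with heq' | hq'
      · exfalso
        have := (h.1 _ hp').1
        simp only [Prod.mk.injEq] at heq'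
        omega
      · exact h.2.1 _ hp' _ hq' rfl
  · rintro ⟨pa, pb⟩ hp ⟨qa, qb⟩ hq hpq
    simp only [Prod.snd] at hpq
    subst hpq
    rcases Finset.mem_insert.1 hp with heq | hp'
    · rcases Finset.mem_insert.1 hq with heq' | hq'
      · rw [heq, heq']
      · exfalso
        simp only [Prod.mk.injEq] at heq
        exact hyQ (mem_prYN.2 ⟨qa, by rw [← heq.2]; exact hq'⟩)
    · rcases Finset.mem_insert.1 hq with heq' | hq'
      · exfalso
        simp only [Prod.mk.injEq] at heq'
        exact hyQ (mem_prYN.2 ⟨pa, by rw [← heq'.2]; exact hp'⟩)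
      · exact h.2.2.1 _ hp' _ hq' rfl
  · rw [Finset.card_insert_of_notMem hnQ, h.2.2.2.1]; omega
  · rw [hQsub, hQsup]
    rw [Finset.eq_empty_iff_forall_notMem]
    intro a ha
    rw [Finset.mem_inter] at ha
    have h2 := ha.2
    obtain ⟨c, hc⟩ := mem_prYN.1 h2
    have hcQ := (mem_QsupN.1 hc).1
    have haQ : a ∈ prXN (QsubN Q) ∨ a = n := by
      obtain ⟨b, hb⟩ := mem_prXN.1 ha.1
      rcases Finset.mem_insert.1 hb with heq | hb'
      · right; exact congrArg Prod.fst heq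
      · left; exact mem_prXN.2 ⟨b, hb'⟩
    rcases haQ with haQ | rfl
    · exact hook_not h haQ h2
    · have := (h.1 _ hcQ).2; omega
  · unfold prYN; rw [Finset.image_insert]
  · exact mem_prXN.2 ⟨y, Finset.mem_insert_self _ _⟩
  · rw [Finset.filter_insert, if_neg (by simp)]
    apply Finset.filter_true_of_mem
    intro p hp
    have := (h.1 p hp).1; omega

/-- Inserting `(x, n)` (a supdiagonal pair at the new max). -/
lemma insertY {n k : ℕ} {Q : Finset (ℕ × ℕ)} {x : ℕ} (h : SHQP n (k+1) Q)
    (hxn : x < n) (hxQ : x ∉ prXN Q) (hkn : k + 1 ≤ n) :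
    SHQP (n+1) (k+1) (insert (x, n) Q) ∧
    QsubN (insert (x, n) Q) = QsubN Q ∧
    prYN (insert (x, n) Q) = insert n (prYN Q) ∧
    n ∉ prXN (insert (x, n) Q) ∧ n ∈ prYN (insert (x, n) Q) ∧
    (insert (x, n) Q).filter (fun p => p.2 ≠ n) = Q := by
  have hnQ : (x, n) ∉ Q := bound_notmem h (x, n) (Or.inr le_rfl)
  have hQsub : QsubN (insert (x, n) Q) = QsubN Q := by
    unfold QsubN
    rw [Finset.filter_insert, if_neg (by simp; omega)]
  have hQsup : QsupN (insert (x, n) Q) = insert (x, n) (QsupN Q) := by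
    unfold QsupN
    rw [Finset.filter_insert, if_pos (by simp; omega)]
  refine ⟨⟨?_, ?_, ?_, ?_, ?_⟩, hQsub, ?_, ?_, ?_, ?_⟩
  · intro p hp
    rcases Finset.mem_insert.1 hp with rfl | hp'
    · simp; omega
    · have := h.1 p hp'; omega
  · rintro ⟨pa, pb⟩ hp ⟨qa, qb⟩ hq hpq
    simp only [Prod.fst] at hpq
    subst hpq
    rcases Finset.mem_insert.1 hp with heq | hp'
    · rcases Finset.mem_insert.1 hq with heq' | hq'
      · rw [heq, heq']
      · exfalso
        simp only [Prod.mk.injEq] at heq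
        exact hxQ (mem_prXN.2 ⟨qb, by rw [← heq.1]; exact hq'⟩)
    · rcases Finset.mem_insert.1 hq with heq' | hq'
      · exfalso
        simp only [Prod.mk.injEq] at heq'
        exact hxQ (mem_prXN.2 ⟨pb, by rw [← heq'.1]; exact hp'⟩)
      · exact h.2.1 _ hp' _ hq' rfl
  · rintro ⟨pa, pb⟩ hp ⟨qa, qb⟩ hq hpq
    simp only [Prod.snd] at hpq
    subst hpq
    rcases Finset.mem_insert.1 hp with heq | hp'
    · rcases Finset.mem_insert.1 hq with heq' | hq'
      · rw [heq, heq']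
      · exfalso
        have := (h.1 _ hq').2
        simp only [Prod.mk.injEq] at heq
        omega
    · rcases Finset.mem_insert.1 hq with heq' | hq'
      · exfalso
        have := (h.1 _ hp').2
        simp only [Prod.mk.injEq] at heq'
        omega
      · exact h.2.2.1 _ hp' _ hq' rfl
  · rw [Finset.card_insert_of_notMem hnQ, h.2.2.2.1]; omega
  · rw [hQsub, hQsup]
    rw [Finset.eq_empty_iff_forall_notMem]
    intro a ha
    rw [Finset.mem_inter] at ha
    have h1 := ha.1
    obtain ⟨b, hb⟩ := mem_prXN.1 h1
    have hbQ := (mem_QsubN.1 hb).1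
    have haQ : a ∈ prYN (QsupN Q) ∨ a = n := by
      obtain ⟨c, hc⟩ := mem_prYN.1 ha.2
      rcases Finset.mem_insert.1 hc with heq | hc'
      · right; exact congrArg Prod.snd heq
      · left; exact mem_prYN.2 ⟨c, hc'⟩
    rcases haQ with haQ | rfl
    · exact hook_not h h1 haQ
    · have := (h.1 _ hbQ).1; omega
  · unfold prYN; rw [Finset.image_insert]
  · intro hc
    obtain ⟨b, hb⟩ := mem_prXN.1 hc
    rcases Finset.mem_insert.1 hb with heq | hb'
    · have : n = x := congrArg Prod.fst heq
      omega
    · have := (h.1 _ hb').1; omega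
  · exact mem_prYN.2 ⟨x, Finset.mem_insert_self _ _⟩
  · rw [Finset.filter_insert, if_neg (by simp)]
    apply Finset.filter_true_of_mem
    intro p hp
    have := (h.1 p hp).2; omega

/-- Removing the unique pair `(n, y)` from an SHQP of `[n+1]`. -/
lemma removeX {n k : ℕ} {Q : Finset (ℕ × ℕ)} {y : ℕ} (h : SHQP (n+1) (k+1) Q)
    (hy : (n, y) ∈ Q) (hyn : n ∉ prYN Q) (hkn : k + 1 ≤ n) :
    y < n ∧
    Q.filter (fun p => p.1 ≠ n) = Q.erase (n, y) ∧
    SHQP n (k+1) (Q.erase (n, y)) ∧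
    QsubN (Q.erase (n, y)) = (QsubN Q).erase (n, y) ∧
    prYN (Q.erase (n, y)) = (prYN Q).erase y := by
  have hylt : y < n := (max_sub h hy).1
  have hfe : Q.filter (fun p => p.1 ≠ n) = Q.erase (n, y) := by
    ext p
    rw [Finset.mem_filter, Finset.mem_erase]
    constructor
    · rintro ⟨hp, hp1⟩
      refine ⟨fun hc => hp1 (by rw [hc]), hp⟩
    · rintro ⟨hne, hp⟩
      refine ⟨hp, fun hc => hne ?_⟩
      have := h.2.1 p hp (n, y) hy (by rw [hc])
      exact this
  have hbnd : ∀ p ∈ Q.erase (n, y), p.1 < n ∧ p.2 < n := by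
    intro p hp
    rw [Finset.mem_erase] at hp
    have hb := h.1 p hp.2
    have h1 : p.1 ≠ n := by
      intro hc
      exact hp.1 (h.2.1 p hp.2 (n, y) hy (by rw [hc]))
    have h2 : p.2 ≠ n := fun hc => hyn (mem_prYN.2 ⟨p.1, by rw [← hc]; exact hp.2⟩)
    omega
  refine ⟨hylt, hfe, ⟨hbnd, ?_, ?_, ?_, ?_⟩, ?_, ?_⟩
  · intro p hp q hq hpq
    exact h.2.1 p (Finset.mem_of_mem_erase hp) q (Finset.mem_of_mem_erase hq) hpq
  · intro p hp q hq hpq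
    exact h.2.2.1 p (Finset.mem_of_mem_erase hp) q (Finset.mem_of_mem_erase hq) hpq
  · rw [Finset.card_erase_of_mem hy, h.2.2.2.1]; omega
  · exact hook_of_subset (Finset.erase_subset _ _) h.2.2.2.2
  · unfold QsubN
    ext p
    rw [Finset.mem_filter, Finset.mem_erase, Finset.mem_erase, Finset.mem_filter]
    tauto
  · ext b
    rw [Finset.mem_erase]
    constructor
    · intro hb
      obtain ⟨a, ha⟩ := mem_prYN.1 hb
      rw [Finset.mem_erase] at ha
      exact ⟨fun hc => ha.1 (h.2.2.1 (a, b) ha.2 (n, y) hy hc), mem_prYN.2 ⟨a, ha.2⟩⟩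
    · rintro ⟨hne, hb⟩
      obtain ⟨a, ha⟩ := mem_prYN.1 hb
      exact mem_prYN.2 ⟨a, Finset.mem_erase.2 ⟨fun hc => hne (congrArg Prod.snd hc), ha⟩⟩

/-- Removing the unique pair `(x, n)` from an SHQP of `[n+1]`. -/
lemma removeY {n k : ℕ} {Q : Finset (ℕ × ℕ)} {x : ℕ} (h : SHQP (n+1) (k+1) Q)
    (hx : (x, n) ∈ Q) (hxn : n ∉ prXN Q) (hkn : k + 1 ≤ n) :
    x < n ∧
    Q.filter (fun p => p.2 ≠ n) = Q.erase (x, n) ∧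
    SHQP n (k+1) (Q.erase (x, n)) ∧
    QsubN (Q.erase (x, n)) = QsubN Q ∧
    prYN (Q.erase (x, n)) = (prYN Q).erase n ∧
    prXN (Q.erase (x, n)) = (prXN Q).erase x := by
  have hxlt : x < n := (max_sup h hx).1
  have hfe : Q.filter (fun p => p.2 ≠ n) = Q.erase (x, n) := by
    ext p
    rw [Finset.mem_filter, Finset.mem_erase]
    constructor
    · rintro ⟨hp, hp1⟩
      refine ⟨fun hc => hp1 (by rw [hc]), hp⟩
    · rintro ⟨hne, hp⟩
      exact ⟨hp, fun hc => hne (h.2.2.1 p hp (x, n) hx (by rw [hc]))⟩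
  have hbnd : ∀ p ∈ Q.erase (x, n), p.1 < n ∧ p.2 < n := by
    intro p hp
    rw [Finset.mem_erase] at hp
    have hb := h.1 p hp.2
    have h2 : p.2 ≠ n := by
      intro hc
      exact hp.1 (h.2.2.1 p hp.2 (x, n) hx (by rw [hc]))
    have h1 : p.1 ≠ n := fun hc => hxn (mem_prXN.2 ⟨p.2, by rw [← hc]; exact hp.2⟩)
    omega
  refine ⟨hxlt, hfe, ⟨hbnd, ?_, ?_, ?_, ?_⟩, ?_, ?_, ?_⟩
  · intro p hp q hq hpq
    exact h.2.1 p (Finset.mem_of_mem_erase hp) q (Finset.mem_of_mem_erase hq) hpq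
  · intro p hp q hq hpq
    exact h.2.2.1 p (Finset.mem_of_mem_erase hp) q (Finset.mem_of_mem_erase hq) hpq
  · rw [Finset.card_erase_of_mem hx, h.2.2.2.1]; omega
  · exact hook_of_subset (Finset.erase_subset _ _) h.2.2.2.2
  · unfold QsubN
    ext p
    rw [Finset.mem_filter, Finset.mem_erase, Finset.mem_filter]
    constructor
    · tauto
    · rintro ⟨hp, hle⟩
      refine ⟨⟨fun hc => ?_, hp⟩, hle⟩
      rw [hc] at hle
      simp at hle
      omega
  · ext b
    rw [Finset.mem_erase]
    constructor
    · intro hb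
      obtain ⟨a, ha⟩ := mem_prYN.1 hb
      rw [Finset.mem_erase] at ha
      exact ⟨fun hc => ha.1 (h.2.2.1 (a, b) ha.2 (x, n) hx hc), mem_prYN.2 ⟨a, ha.2⟩⟩
    · rintro ⟨hne, hb⟩
      obtain ⟨a, ha⟩ := mem_prYN.1 hb
      exact mem_prYN.2 ⟨a, Finset.mem_erase.2 ⟨fun hc => hne (congrArg Prod.snd hc), ha⟩⟩
  · ext a
    rw [Finset.mem_erase]
    constructor
    · intro hb
      obtain ⟨b, hbm⟩ := mem_prXN.1 hb
      rw [Finset.mem_erase] at hbm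
      exact ⟨fun hc => hbm.1 (h.2.1 (a, b) hbm.2 (x, n) hx hc), mem_prXN.2 ⟨b, hbm.2⟩⟩
    · rintro ⟨hne, hb⟩
      obtain ⟨b, hbm⟩ := mem_prXN.1 hb
      exact mem_prXN.2 ⟨b, Finset.mem_erase.2 ⟨fun hc => hne (congrArg Prod.fst hc), hbm⟩⟩

lemma piece0 {n k i : ℕ} :
    (gset (n+1) (k+1) i).filter (fun QQ => n ∉ prXN QQ.1 ∧ n ∉ prYN QQ.1) = gset n k i := by
  ext QQ
  rw [Finset.mem_filter, mem_gset, mem_gset]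
  constructor
  · rintro ⟨h, hx1, hy1⟩
    have hy2 : n ∉ prYN QQ.2 := by rw [← h.2.2.2.2]; exact hy1
    have hx2 : n ∉ prXN QQ.2 := fun hc => hx1 (prX_transfer' h hc)
    exact ⟨SHQP_down h.1 hx1 hy1, SHQP_down h.2.1 hx2 hy2, h.2.2.1, h.2.2.2.1, h.2.2.2.2⟩
  · rintro ⟨h1, h2, h3, h4, h5⟩
    refine ⟨⟨SHQP_up h1, SHQP_up h2, h3, h4, h5⟩, ?_, ?_⟩
    · intro hc
      have := prXN_subset_range h1 hc
      simp at this
    · intro hc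
      have := prYN_subset_range h1 hc
      simp at this

/-- Unpacking an element of the `n ∈ prX Q₁` piece. -/
lemma piece1_unpack {n k i : ℕ} {QQ : Finset (ℕ × ℕ) × Finset (ℕ × ℕ)}
    (h : PairCond (n+1) (k+1) i QQ) (hx : n ∈ prXN QQ.1) :
    ∃ y, (n, y) ∈ QQ.1 ∧ (n, y) ∈ QQ.2 ∧ n ∉ prYN QQ.1 ∧ n ∉ prYN QQ.2 ∧
      (n, y) ∈ QsubN QQ.1 := by
  obtain ⟨y, hy⟩ := mem_prXN.1 hx
  have hsub := (max_sub h.1 hy).2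
  have hy2 : (n, y) ∈ QQ.2 := by
    have := hsub
    rw [h.2.2.1] at this
    exact (mem_QsubN.1 this).1
  have hyn1 : n ∉ prYN QQ.1 := fun hc => not_both_max h.1 hx hc
  have hyn2 : n ∉ prYN QQ.2 := by rw [← h.2.2.2.2]; exact hyn1
  exact ⟨y, hy, hy2, hyn1, hyn2, hsub⟩

lemma piece1_empty {n k : ℕ} :
    (gset (n+1) (k+1) 0).filter (fun QQ => n ∈ prXN QQ.1) = ∅ := by
  apply Finset.eq_empty_of_forall_notMem
  intro QQ hQQ
  rw [Finset.mem_filter, mem_gset] at hQQ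
  obtain ⟨h, hx⟩ := hQQ
  obtain ⟨y, hy, hy2, hyn1, hyn2, hsub⟩ := piece1_unpack h hx
  have : (QsubN QQ.1).card = 0 := h.2.2.2.1
  rw [Finset.card_eq_zero] at this
  rw [this] at hsub
  exact Finset.notMem_empty _ hsub

lemma piece1_card {n k i : ℕ} (hkn : k + 1 ≤ n) (hi : 1 ≤ i) :
    ((gset (n+1) (k+1) i).filter (fun QQ => n ∈ prXN QQ.1)).card =
      (k + 1) * gcard n (k+1) (i-1) := by
  classical
  set T := (gset (n+1) (k+1) i).filter (fun QQ => n ∈ prXN QQ.1) with hT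
  set f : Finset (ℕ × ℕ) × Finset (ℕ × ℕ) → Finset (ℕ × ℕ) × Finset (ℕ × ℕ) :=
    fun QQ => (QQ.1.filter (fun p => p.1 ≠ n), QQ.2.filter (fun p => p.1 ≠ n)) with hf
  have hmap : ∀ QQ ∈ T, f QQ ∈ gset n (k+1) (i-1) := by
    intro QQ hQQ
    rw [hT, Finset.mem_filter, mem_gset] at hQQ
    obtain ⟨h, hx⟩ := hQQ
    obtain ⟨y, hy, hy2, hyn1, hyn2, hsub⟩ := piece1_unpack h hx
    obtain ⟨hy1lt, hfe1, hS1, hQ1, hP1⟩ := removeX h.1 hy hyn1 hkn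
    obtain ⟨hy2lt, hfe2, hS2, hQ2, hP2⟩ := removeX h.2.1 hy2 hyn2 hkn
    rw [mem_gset, hf]
    simp only [hfe1, hfe2]
    refine ⟨hS1, hS2, ?_, ?_, ?_⟩
    · rw [hQ1, hQ2, h.2.2.1]
    · rw [hQ1, Finset.card_erase_of_mem hsub, h.2.2.2.1]
    · rw [hP1, hP2, h.2.2.2.2]
  rw [Finset.card_eq_sum_card_fiberwise hmap]
  have hfib : ∀ QQ' ∈ gset n (k+1) (i-1),
      (T.filter (fun QQ => f QQ = QQ')).card = k + 1 := by
    intro QQ' hQQ'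
    have h' := mem_gset.1 hQQ'
    have hcard_s : (Finset.range n \ prYN QQ'.1).card = k + 1 := by
      rw [Finset.card_sdiff_of_subset (prYN_subset_range h'.1), Finset.card_range,
        prYN_card h'.1.2.2.1, h'.1.2.2.2.1]
      omega
    rw [← hcard_s]
    symm
    apply Finset.card_bij (fun y _ => ((insert (n, y) QQ'.1, insert (n, y) QQ'.2) :
      Finset (ℕ × ℕ) × Finset (ℕ × ℕ)))
    · intro y hy
      rw [Finset.mem_sdiff, Finset.mem_range] at hy
      obtain ⟨hylt, hynot⟩ := hy
      have hynot2 : y ∉ prYN QQ'.2 := by rw [← h'.2.2.2.2]; exact hynot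
      obtain ⟨hS1, hQ1, hP1, hXmem1, hF1⟩ := insertX h'.1 hylt hynot hkn
      obtain ⟨hS2, hQ2, hP2, hXmem2, hF2⟩ := insertX h'.2.1 hylt hynot2 hkn
      rw [Finset.mem_filter, hT, Finset.mem_filter, mem_gset]
      have hnotsub1 : (n, y) ∉ QsubN QQ'.1 :=
        fun hc => bound_notmem h'.1 (n, y) (Or.inl le_rfl) (mem_QsubN.1 hc).1
      refine ⟨⟨⟨hS1, hS2, ?_, ?_, ?_⟩, hXmem1⟩, ?_⟩
      · rw [hQ1, hQ2, h'.2.2.1]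
      · rw [hQ1, Finset.card_insert_of_notMem hnotsub1, h'.2.2.2.1]; omega
      · rw [hP1, hP2, h'.2.2.2.2]
      · rw [hf]; simp only [hF1, hF2]
    · intro y1 hy1 y2 hy2 heq
      have h1 : insert ((n : ℕ), y1) QQ'.1 = insert (n, y2) QQ'.1 := congrArg Prod.fst heq
      have : ((n : ℕ), y1) ∈ insert ((n : ℕ), y2) QQ'.1 := h1 ▸ Finset.mem_insert_self _ _
      rcases Finset.mem_insert.1 this with hc | hc
      · exact congrArg Prod.snd hc
      · exact absurd hc (bound_notmem h'.1 (n, y1) (Or.inl le_rfl))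
    · intro QQ hQQ
      rw [Finset.mem_filter] at hQQ
      obtain ⟨hQT, hfQQ⟩ := hQQ
      rw [hT, Finset.mem_filter, mem_gset] at hQT
      obtain ⟨h, hx⟩ := hQT
      obtain ⟨y, hy, hy2, hyn1, hyn2, hsub⟩ := piece1_unpack h hx
      obtain ⟨hy1lt, hfe1, _, _, hP1⟩ := removeX h.1 hy hyn1 hkn
      obtain ⟨hy2lt, hfe2, _, _, hP2⟩ := removeX h.2.1 hy2 hyn2 hkn
      have e1 : QQ.1.filter (fun p => p.1 ≠ n) = QQ'.1 := congrArg Prod.fst hfQQ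
      have e2 : QQ.2.filter (fun p => p.1 ≠ n) = QQ'.2 := congrArg Prod.snd hfQQ
      have hq1 : QQ'.1 = QQ.1.erase (n, y) := by rw [← e1, hfe1]
      have hq2 : QQ'.2 = QQ.2.erase (n, y) := by rw [← e2, hfe2]
      refine ⟨y, ?_, ?_⟩
      · rw [Finset.mem_sdiff, Finset.mem_range]
        refine ⟨hy1lt, ?_⟩
        rw [hq1, hP1]
        exact Finset.notMem_erase _ _
      · apply Prod.ext
        · show insert ((n : ℕ), y) QQ'.1 = QQ.1
          rw [hq1, Finset.insert_erase hy]
        · show insert ((n : ℕ), y) QQ'.2 = QQ.2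
          rw [hq2, Finset.insert_erase hy2]
  rw [Finset.sum_congr rfl hfib, Finset.sum_const, smul_eq_mul]
  unfold gcard
  ring

lemma piece2_unpack {n k i : ℕ} {QQ : Finset (ℕ × ℕ) × Finset (ℕ × ℕ)}
    (h : PairCond (n+1) (k+1) i QQ) (hnx : n ∉ prXN QQ.1) (hy : n ∈ prYN QQ.1) :
    ∃ x₁ x₂, (x₁, n) ∈ QQ.1 ∧ (x₂, n) ∈ QQ.2 ∧ n ∉ prXN QQ.2 ∧ n ∈ prYN QQ.2 := by
  obtain ⟨x₁, hx₁⟩ := mem_prYN.1 hy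
  have hy2 : n ∈ prYN QQ.2 := by rw [← h.2.2.2.2]; exact hy
  obtain ⟨x₂, hx₂⟩ := mem_prYN.1 hy2
  exact ⟨x₁, x₂, hx₁, hx₂, fun hc => hnx (prX_transfer' h hc), hy2⟩

lemma piece2_card {n k i : ℕ} (hkn : k + 1 ≤ n) :
    ((gset (n+1) (k+1) i).filter (fun QQ => n ∉ prXN QQ.1 ∧ n ∈ prYN QQ.1)).card =
      (k + 1) * (k + 1) * gcard n (k+1) i := by
  classical
  set T := (gset (n+1) (k+1) i).filter (fun QQ => n ∉ prXN QQ.1 ∧ n ∈ prYN QQ.1) with hT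
  set f : Finset (ℕ × ℕ) × Finset (ℕ × ℕ) → Finset (ℕ × ℕ) × Finset (ℕ × ℕ) :=
    fun QQ => (QQ.1.filter (fun p => p.2 ≠ n), QQ.2.filter (fun p => p.2 ≠ n)) with hf
  have hmap : ∀ QQ ∈ T, f QQ ∈ gset n (k+1) i := by
    intro QQ hQQ
    rw [hT, Finset.mem_filter, mem_gset] at hQQ
    obtain ⟨h, hnx, hy⟩ := hQQ
    obtain ⟨x₁, x₂, hx₁, hx₂, hnx2, hy2⟩ := piece2_unpack h hnx hy
    obtain ⟨hx1lt, hfe1, hS1, hQ1, hP1, hX1⟩ := removeY h.1 hx₁ hnx hkn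
    obtain ⟨hx2lt, hfe2, hS2, hQ2, hP2, hX2⟩ := removeY h.2.1 hx₂ hnx2 hkn
    rw [mem_gset, hf]
    simp only [hfe1, hfe2]
    refine ⟨hS1, hS2, ?_, ?_, ?_⟩
    · rw [hQ1, hQ2, h.2.2.1]
    · rw [hQ1, h.2.2.2.1]
    · rw [hP1, hP2, h.2.2.2.2]
  rw [Finset.card_eq_sum_card_fiberwise hmap]
  have hfib : ∀ QQ' ∈ gset n (k+1) i,
      (T.filter (fun QQ => f QQ = QQ')).card = (k + 1) * (k + 1) := by
    intro QQ' hQQ'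
    have h' := mem_gset.1 hQQ'
    have hcard1 : (Finset.range n \ prXN QQ'.1).card = k + 1 := by
      rw [Finset.card_sdiff_of_subset (prXN_subset_range h'.1), Finset.card_range,
        prXN_card h'.1.2.1, h'.1.2.2.2.1]
      omega
    have hcard2 : (Finset.range n \ prXN QQ'.2).card = k + 1 := by
      rw [Finset.card_sdiff_of_subset (prXN_subset_range h'.2.1), Finset.card_range,
        prXN_card h'.2.1.2.1, h'.2.1.2.2.2.1]
      omega
    have : ((Finset.range n \ prXN QQ'.1) ×ˢ (Finset.range n \ prXN QQ'.2)).card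
        = (k + 1) * (k + 1) := by
      rw [Finset.card_product, hcard1, hcard2]
    rw [← this]
    symm
    apply Finset.card_bij (fun x _ => ((insert (x.1, n) QQ'.1, insert (x.2, n) QQ'.2) :
      Finset (ℕ × ℕ) × Finset (ℕ × ℕ)))
    · rintro ⟨x₁, x₂⟩ hx
      rw [Finset.mem_product, Finset.mem_sdiff, Finset.mem_sdiff,
        Finset.mem_range, Finset.mem_range] at hx
      obtain ⟨⟨hx1lt, hx1not⟩, hx2lt, hx2not⟩ := hx
      obtain ⟨hS1, hQ1, hP1, hXn1, hYn1, hF1⟩ := insertY h'.1 hx1lt hx1not hkn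
      obtain ⟨hS2, hQ2, hP2, hXn2, hYn2, hF2⟩ := insertY h'.2.1 hx2lt hx2not hkn
      rw [Finset.mem_filter, hT, Finset.mem_filter, mem_gset]
      refine ⟨⟨⟨hS1, hS2, ?_, ?_, ?_⟩, hXn1, hYn1⟩, ?_⟩
      · rw [hQ1, hQ2, h'.2.2.1]
      · rw [hQ1, h'.2.2.2.1]
      · rw [hP1, hP2, h'.2.2.2.2]
      · rw [hf]; simp only [hF1, hF2]
    · rintro ⟨x₁, x₂⟩ hx ⟨x₁', x₂'⟩ hx' heq
      rw [Finset.mem_product, Finset.mem_sdiff, Finset.mem_sdiff] at hx hx'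
      have h1 : insert (x₁, (n : ℕ)) QQ'.1 = insert (x₁', n) QQ'.1 := congrArg Prod.fst heq
      have h2 : insert (x₂, (n : ℕ)) QQ'.2 = insert (x₂', n) QQ'.2 := congrArg Prod.snd heq
      have m1 : (x₁, (n : ℕ)) ∈ insert (x₁', (n : ℕ)) QQ'.1 := h1 ▸ Finset.mem_insert_self _ _
      have m2 : (x₂, (n : ℕ)) ∈ insert (x₂', (n : ℕ)) QQ'.2 := h2 ▸ Finset.mem_insert_self _ _
      have e1 : x₁ = x₁' := by
        rcases Finset.mem_insert.1 m1 with hc | hc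
        · exact congrArg Prod.fst hc
        · exact absurd hc (bound_notmem h'.1 (x₁, n) (Or.inr le_rfl))
      have e2 : x₂ = x₂' := by
        rcases Finset.mem_insert.1 m2 with hc | hc
        · exact congrArg Prod.fst hc
        · exact absurd hc (bound_notmem h'.2.1 (x₂, n) (Or.inr le_rfl))
      rw [Prod.mk.injEq]
      exact ⟨e1, e2⟩
    · intro QQ hQQ
      rw [Finset.mem_filter] at hQQ
      obtain ⟨hQT, hfQQ⟩ := hQQ
      rw [hT, Finset.mem_filter, mem_gset] at hQT
      obtain ⟨h, hnx, hy⟩ := hQT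
      obtain ⟨x₁, x₂, hx₁, hx₂, hnx2, hy2⟩ := piece2_unpack h hnx hy
      obtain ⟨hx1lt, hfe1, _, _, _, hX1⟩ := removeY h.1 hx₁ hnx hkn
      obtain ⟨hx2lt, hfe2, _, _, _, hX2⟩ := removeY h.2.1 hx₂ hnx2 hkn
      have e1 : QQ.1.filter (fun p => p.2 ≠ n) = QQ'.1 := congrArg Prod.fst hfQQ
      have e2 : QQ.2.filter (fun p => p.2 ≠ n) = QQ'.2 := congrArg Prod.snd hfQQ
      have hq1 : QQ'.1 = QQ.1.erase (x₁, n) := by rw [← e1, hfe1]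
      have hq2 : QQ'.2 = QQ.2.erase (x₂, n) := by rw [← e2, hfe2]
      refine ⟨(x₁, x₂), ?_, ?_⟩
      · rw [Finset.mem_product, Finset.mem_sdiff, Finset.mem_sdiff,
          Finset.mem_range, Finset.mem_range]
        refine ⟨⟨hx1lt, ?_⟩, hx2lt, ?_⟩
        · rw [hq1, hX1]; exact Finset.notMem_erase _ _
        · rw [hq2, hX2]; exact Finset.notMem_erase _ _
      · apply Prod.ext
        · show insert (x₁, (n : ℕ)) QQ'.1 = QQ.1
          rw [hq1, Finset.insert_erase hx₁]
        · show insert (x₂, (n : ℕ)) QQ'.2 = QQ.2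
          rw [hq2, Finset.insert_erase hx₂]
  rw [Finset.sum_congr rfl hfib, Finset.sum_const, smul_eq_mul]
  unfold gcard
  ring

lemma gcard_rec {n k i : ℕ} (hkn : k + 1 ≤ n) :
    gcard (n+1) (k+1) i = gcard n k i + (k + 1) * (k + 1) * gcard n (k+1) i +
      (if i = 0 then 0 else (k + 1) * gcard n (k+1) (i-1)) := by
  classical
  have hsplit1 := Finset.card_filter_add_card_filter_not
    (s := gset (n+1) (k+1) i) (p := fun QQ => n ∈ prXN QQ.1)
  have hsplit2 := Finset.card_filter_add_card_filter_not
    (s := (gset (n+1) (k+1) i).filter (fun QQ => ¬ n ∈ prXN QQ.1))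
    (p := fun QQ => n ∈ prYN QQ.1)
  rw [Finset.filter_filter, Finset.filter_filter] at hsplit2
  have h1 : ((gset (n+1) (k+1) i).filter (fun QQ => n ∈ prXN QQ.1)).card
      = (if i = 0 then 0 else (k + 1) * gcard n (k+1) (i-1)) := by
    rcases Nat.eq_zero_or_pos i with rfl | hi
    · simp [piece1_empty]
    · rw [if_neg (by omega)]
      exact piece1_card hkn hi
  have h2 : ((gset (n+1) (k+1) i).filter
      (fun QQ => ¬ n ∈ prXN QQ.1 ∧ n ∈ prYN QQ.1)).card
      = (k + 1) * (k + 1) * gcard n (k+1) i := piece2_card hkn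
  have h0 : ((gset (n+1) (k+1) i).filter
      (fun QQ => ¬ n ∈ prXN QQ.1 ∧ ¬ n ∈ prYN QQ.1)).card = gcard n k i := by
    rw [piece0]; rfl
  have : gcard (n+1) (k+1) i
      = ((gset (n+1) (k+1) i).filter (fun QQ => n ∈ prXN QQ.1)).card
        + (((gset (n+1) (k+1) i).filter
            (fun QQ => ¬ n ∈ prXN QQ.1 ∧ n ∈ prYN QQ.1)).card
          + ((gset (n+1) (k+1) i).filter
            (fun QQ => ¬ n ∈ prXN QQ.1 ∧ ¬ n ∈ prYN QQ.1)).card) := by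
    rw [hsplit2, hsplit1]; rfl
  rw [this, h0, h1, h2]
  ring

lemma JS_zero_of_lt : ∀ n k : ℕ, n < k → JS n k = 0 := by
  intro n
  induction n with
  | zero => intro k hk; match k, hk with | k + 1, _ => rfl
  | succ n ih =>
    intro k hk
    match k, hk with
    | k + 1, hk =>
      show JS n k + C ((k : ℤ) + 1) * (C ((k : ℤ) + 1) + X) * JS n (k + 1) = 0
      rw [ih k (by omega), ih (k + 1) (by omega)]
      ring

lemma JS_diag : ∀ n : ℕ, JS n n = 1 := by
  intro n
  induction n with
  | zero => rfl
  | succ n ih =>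
    show JS n n + C ((n : ℤ) + 1) * (C ((n : ℤ) + 1) + X) * JS n (n + 1) = 1
    rw [ih, JS_zero_of_lt n (n + 1) (by omega)]
    ring

lemma master : ∀ n k i : ℕ, k ≤ n → (JS n k).coeff i = (gcard n k i : ℤ) := by
  intro n
  induction n with
  | zero =>
    intro k i hk
    interval_cases k
    rw [gcard_of_ge le_rfl]
    show (1 : Polynomial ℤ).coeff i = _
    rw [Polynomial.coeff_one]
    split <;> simp_all
  | succ n ih =>
    intro k i hk
    match k with
    | 0 =>
      show (0 : Polynomial ℤ).coeff i = _
      rw [gcard_zero (by omega)]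
      simp
    | k + 1 =>
      rcases Nat.lt_or_ge k n with hkn | hkn
      · -- k + 1 ≤ n
        have hrec := gcard_rec (n := n) (k := k) (i := i) (by omega)
        show (JS n k + C ((k : ℤ) + 1) * (C ((k : ℤ) + 1) + X) * JS n (k + 1)).coeff i = _
        rw [Polynomial.coeff_add, hrec]
        have hx : (C ((k : ℤ) + 1) * (C ((k : ℤ) + 1) + X) * JS n (k + 1)).coeff i
            = ((k : ℤ) + 1) * ((k : ℤ) + 1) * (JS n (k + 1)).coeff i
              + ((k : ℤ) + 1) * (if i = 0 then 0 else (JS n (k + 1)).coeff (i - 1)) := by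
          have expand : C ((k : ℤ) + 1) * (C ((k : ℤ) + 1) + X) * JS n (k + 1)
              = C (((k : ℤ) + 1) * ((k : ℤ) + 1)) * JS n (k + 1)
                + C ((k : ℤ) + 1) * (X * JS n (k + 1)) := by
            rw [C_mul]; ring
          rw [expand, Polynomial.coeff_add, Polynomial.coeff_C_mul, Polynomial.coeff_C_mul]
          have hXc : (X * JS n (k + 1)).coeff i
              = (if i = 0 then 0 else (JS n (k + 1)).coeff (i - 1)) := by
            rcases i with _ | j
            · rw [Polynomial.mul_coeff_zero, Polynomial.coeff_X_zero]
              simp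
            · rw [Polynomial.coeff_X_mul]
              simp
          rw [hXc]
        rw [hx, ih k i (by omega), ih (k + 1) i (by omega)]
        rcases Nat.eq_zero_or_pos i with rfl | hi
        · simp only [if_pos rfl]
          push_cast
          ring
        · rw [if_neg (by omega), if_neg (by omega), ih (k + 1) (i - 1) (by omega)]
          push_cast
          ring
      · -- k = n
        have hkeq : k = n := by omega
        subst hkeq
        show (JS k k + C ((k : ℤ) + 1) * (C ((k : ℤ) + 1) + X) * JS k (k + 1)).coeff i = _
        rw [JS_diag, JS_zero_of_lt k (k + 1) (by omega), gcard_of_ge (le_refl (k + 1))]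
        rw [mul_zero, add_zero, Polynomial.coeff_one]
        split <;> simp_all

/-- A partial injection on `Fin n` extends to a permutation. -/
lemma exists_perm_of_inj {n : ℕ} (Q : Finset (Fin n × Fin n))
    (hx : ∀ p ∈ Q, ∀ q ∈ Q, p.1 = q.1 → p = q)
    (hy : ∀ p ∈ Q, ∀ q ∈ Q, p.2 = q.2 → p = q) :
    ∃ σ : Equiv.Perm (Fin n), ∀ p ∈ Q, σ p.1 = p.2 := by
  classical
  set A : Finset (Fin n) := Q.image Prod.fst with hA
  set B : Finset (Fin n) := Q.image Prod.snd with hB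
  have hcA : A.card = Q.card := Finset.card_image_of_injOn (fun p hp q hq h => hx p hp q hq h)
  have hcB : B.card = Q.card := Finset.card_image_of_injOn (fun p hp q hq h => hy p hp q hq h)
  have huniq : ∀ x : Fin n, x ∈ A → ∃! p, p ∈ Q ∧ p.1 = x := by
    intro x hxA
    obtain ⟨p, hp, hpx⟩ := Finset.mem_image.1 hxA
    exact ⟨p, ⟨hp, hpx⟩, fun q ⟨hq, hqx⟩ => hx q hq p hp (by rw [hqx, hpx])⟩
  have hφmem : ∀ (x : Fin n) (hxA : x ∈ A), (Q.choose _ (huniq x hxA)).2 ∈ B := by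
    intro x hxA
    exact Finset.mem_image.2 ⟨_, (Q.choose_mem _ (huniq x hxA)), rfl⟩
  -- equiv between complements
  have hcompl : Aᶜ.card = Bᶜ.card := by
    rw [Finset.card_compl, Finset.card_compl, hcA, hcB]
  have e2 : (Aᶜ : Finset (Fin n)) ≃ (Bᶜ : Finset (Fin n)) := Finset.equivOfCardEq hcompl
  set σf : Fin n → Fin n := fun x =>
    if hxA : x ∈ A then (Q.choose _ (huniq x hxA)).2
    else (e2 ⟨x, Finset.mem_compl.2 hxA⟩ : Fin n) with hσf
  have hσf_spec : ∀ p ∈ Q, σf p.1 = p.2 := by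
    intro p hp
    have hpA : p.1 ∈ A := Finset.mem_image.2 ⟨p, hp, rfl⟩
    rw [hσf]
    simp only [dif_pos hpA]
    have hch := Q.choose_spec _ (huniq p.1 hpA)
    have : Q.choose _ (huniq p.1 hpA) = p := hx _ hch.1 p hp hch.2
    rw [this]
  have hinj : Function.Injective σf := by
    intro a b hab
    rw [hσf] at hab
    by_cases haA : a ∈ A <;> by_cases hbA : b ∈ A
    · simp only [dif_pos haA, dif_pos hbA] at hab
      have h1 := Q.choose_spec _ (huniq a haA)
      have h2 := Q.choose_spec _ (huniq b hbA)
      have := hy _ h1.1 _ h2.1 hab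
      rw [← h1.2, ← h2.2, this]
    · simp only [dif_pos haA, dif_neg hbA] at hab
      exfalso
      have h1 := hφmem a haA
      rw [hab] at h1
      exact Finset.mem_compl.1 (e2 ⟨b, Finset.mem_compl.2 hbA⟩).2 h1
    · simp only [dif_neg haA, dif_pos hbA] at hab
      exfalso
      have h1 := hφmem b hbA
      rw [← hab] at h1
      exact Finset.mem_compl.1 (e2 ⟨a, Finset.mem_compl.2 haA⟩).2 h1
    · simp only [dif_neg haA, dif_neg hbA] at hab
      have h3 := e2.injective (Subtype.ext hab)
      exact congrArg Subtype.val h3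
  exact ⟨Equiv.ofBijective σf (Finite.injective_iff_bijective.1 hinj), fun p hp => by
    simp only [Equiv.ofBijective_apply]; exact hσf_spec p hp⟩

section Transfer

def vmap {n : ℕ} (p : Fin n × Fin n) : ℕ × ℕ := (p.1.val, p.2.val)

lemma vmap_inj {n : ℕ} : Function.Injective (vmap (n := n)) := by
  rintro ⟨a, b⟩ ⟨c, d⟩ h
  simp only [vmap, Prod.mk.injEq] at h
  rw [Prod.mk.injEq]
  exact ⟨Fin.val_injective h.1, Fin.val_injective h.2⟩

def NQ {n : ℕ} (Q : Finset (Fin n × Fin n)) : Finset (ℕ × ℕ) := Q.image vmap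

lemma NQ_card {n : ℕ} (Q : Finset (Fin n × Fin n)) : (NQ Q).card = Q.card :=
  Finset.card_image_of_injective _ vmap_inj

lemma NQ_inj {n : ℕ} : Function.Injective (NQ (n := n)) :=
  Finset.image_injective vmap_inj

lemma NQ_Qsub {n : ℕ} (Q : Finset (Fin n × Fin n)) : QsubN (NQ Q) = NQ (Qsub Q) := by
  unfold QsubN NQ Qsub
  rw [Finset.filter_image]
  congr 1

lemma NQ_Qsup {n : ℕ} (Q : Finset (Fin n × Fin n)) : QsupN (NQ Q) = NQ (Qsup Q) := by
  unfold QsupN NQ Qsup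
  rw [Finset.filter_image]
  congr 1

lemma NQ_prX {n : ℕ} (Q : Finset (Fin n × Fin n)) :
    prXN (NQ Q) = (prX Q).image Fin.val := by
  unfold prXN NQ prX
  rw [Finset.image_image, Finset.image_image]
  rfl

lemma NQ_prY {n : ℕ} (Q : Finset (Fin n × Fin n)) :
    prYN (NQ Q) = (prY Q).image Fin.val := by
  unfold prYN NQ prY
  rw [Finset.image_image, Finset.image_image]
  rfl

lemma SHQP_bounds {n k : ℕ} {Q : Finset (ℕ × ℕ)} (h : SHQP n k Q) :
    ∀ p ∈ Q, p.1 < n ∧ p.2 < n := h.1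

lemma corr {n k : ℕ} (Q : Finset (Fin n × Fin n)) : IsSHQP n k Q ↔ SHQP n k (NQ Q) := by
  have hook_iff : (prX (Qsub Q) ∩ prY (Qsup Q) = ∅) ↔
      (prXN (QsubN (NQ Q)) ∩ prYN (QsupN (NQ Q)) = ∅) := by
    rw [NQ_Qsub, NQ_Qsup, NQ_prX, NQ_prY, ← Finset.image_inter _ _ Fin.val_injective,
      Finset.image_eq_empty]
  constructor
  · rintro ⟨⟨σ, hσ⟩, hcard, hhook⟩
    refine ⟨?_, ?_, ?_, ?_, hook_iff.1 hhook⟩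
    · rintro ⟨a, b⟩ hp
      obtain ⟨q, hq, hvq⟩ := Finset.mem_image.1 hp
      simp only [vmap, Prod.mk.injEq] at hvq
      rw [← hvq.1, ← hvq.2]
      exact ⟨q.1.isLt, q.2.isLt⟩
    · rintro p hp q hq hpq
      obtain ⟨p', hp', hvp⟩ := Finset.mem_image.1 hp
      obtain ⟨q', hq', hvq⟩ := Finset.mem_image.1 hq
      rw [← hvp, ← hvq]
      congr 1
      have h1 : p'.1 = q'.1 := by
        apply Fin.val_injective
        have : (vmap p').1 = (vmap q').1 := by rw [hvp, hvq]; exact hpq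
        exact this
      have h2 : p'.2 = q'.2 := by rw [← hσ p' hp', ← hσ q' hq', h1]
      exact Prod.ext h1 h2
    · rintro p hp q hq hpq
      obtain ⟨p', hp', hvp⟩ := Finset.mem_image.1 hp
      obtain ⟨q', hq', hvq⟩ := Finset.mem_image.1 hq
      rw [← hvp, ← hvq]
      congr 1
      have h2 : p'.2 = q'.2 := by
        apply Fin.val_injective
        have : (vmap p').2 = (vmap q').2 := by rw [hvp, hvq]; exact hpq
        exact this
      have h1 : p'.1 = q'.1 := by
        apply σ.injective
        rw [hσ p' hp', hσ q' hq', h2]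
      exact Prod.ext h1 h2
    · rw [NQ_card]; exact hcard
  · rintro ⟨hbnd, hxinj, hyinj, hcard, hhook⟩
    have hx : ∀ p ∈ Q, ∀ q ∈ Q, p.1 = q.1 → p = q := by
      intro p hp q hq hpq
      apply vmap_inj
      apply hxinj (vmap p) (Finset.mem_image_of_mem _ hp) (vmap q)
        (Finset.mem_image_of_mem _ hq)
      exact congrArg Fin.val hpq
    have hy : ∀ p ∈ Q, ∀ q ∈ Q, p.2 = q.2 → p = q := by
      intro p hp q hq hpq
      apply vmap_inj
      apply hyinj (vmap p) (Finset.mem_image_of_mem _ hp) (vmap q)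
        (Finset.mem_image_of_mem _ hq)
      exact congrArg Fin.val hpq
    refine ⟨exists_perm_of_inj Q hx hy, ?_, hook_iff.2 hhook⟩
    rw [← NQ_card]; exact hcard

def liftQ {n : ℕ} (Q : Finset (ℕ × ℕ)) (h : ∀ p ∈ Q, p.1 < n ∧ p.2 < n) :
    Finset (Fin n × Fin n) :=
  Q.attach.image (fun p => ((⟨p.1.1, (h p.1 p.2).1⟩ : Fin n), (⟨p.1.2, (h p.1 p.2).2⟩ : Fin n)))

lemma NQ_liftQ {n : ℕ} (Q : Finset (ℕ × ℕ)) (h : ∀ p ∈ Q, p.1 < n ∧ p.2 < n) :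
    NQ (liftQ Q h) = Q := by
  unfold NQ liftQ
  rw [Finset.image_image]
  ext p
  constructor
  · intro hp
    obtain ⟨q, hq, hvq⟩ := Finset.mem_image.1 hp
    rw [← hvq]
    simp [vmap]
  · intro hp
    apply Finset.mem_image.2
    exact ⟨⟨p, hp⟩, Finset.mem_attach _ _, by simp [vmap]⟩

end Transfer

/-- For `1 ≤ i ≤ n - k`, the coefficient of `z^i` in `JS n k` is the number of ordered
pairs `(Q₁, Q₂)` of simply hooked `k`-quasi-permutations of `[n]` with `Q₁⁻ = Q₂⁻`,
`|Q₁⁻| = |Q₂⁻| = i` and `pr_y Q₁ = pr_y Q₂`. -/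
theorem stmt10 (n k : ℕ) (hn : 1 ≤ n) (hk : 1 ≤ k) (i : ℕ) (hi1 : 1 ≤ i) (hi2 : i ≤ n - k) :
    (JS n k).coeff i =
      (Nat.card {QQ : Finset (Fin n × Fin n) × Finset (Fin n × Fin n) //
        IsSHQP n k QQ.1 ∧ IsSHQP n k QQ.2 ∧ Qsub QQ.1 = Qsub QQ.2 ∧
        (Qsub QQ.1).card = i ∧ (Qsub QQ.2).card = i ∧ prY QQ.1 = prY QQ.2} : ℤ) := by
  classical
  have hkn : k ≤ n := by omega
  rw [master n k i hkn]
  congr 1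
  rw [Nat.card_eq_fintype_card, Fintype.card_subtype]
  unfold gcard
  symm
  apply Finset.card_bij (fun QQ _ => ((NQ QQ.1, NQ QQ.2) : Finset (ℕ × ℕ) × Finset (ℕ × ℕ)))
  · intro QQ hQQ
    rw [Finset.mem_filter] at hQQ
    obtain ⟨-, h1, h2, h3, h4, h5, h6⟩ := hQQ
    rw [mem_gset]
    refine ⟨(corr QQ.1).1 h1, (corr QQ.2).1 h2, ?_, ?_, ?_⟩
    · rw [NQ_Qsub, NQ_Qsub, h3]
    · rw [NQ_Qsub, NQ_card, h4]
    · rw [NQ_prY, NQ_prY, h6]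
  · intro Q1 h1 Q2 h2 heq
    have e1 : NQ Q1.1 = NQ Q2.1 := congrArg Prod.fst heq
    have e2 : NQ Q1.2 = NQ Q2.2 := congrArg Prod.snd heq
    exact Prod.ext (NQ_inj e1) (NQ_inj e2)
  · intro QQ' hQQ'
    rw [mem_gset] at hQQ'
    obtain ⟨hS1, hS2, h3, h4, h5⟩ := hQQ'
    refine ⟨(liftQ QQ'.1 (SHQP_bounds hS1), liftQ QQ'.2 (SHQP_bounds hS2)), ?_, ?_⟩
    · rw [Finset.mem_filter]
      have hN1 : NQ (liftQ QQ'.1 (SHQP_bounds hS1)) = QQ'.1 := NQ_liftQ _ _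
      have hN2 : NQ (liftQ QQ'.2 (SHQP_bounds hS2)) = QQ'.2 := NQ_liftQ _ _
      refine ⟨Finset.mem_univ _, (corr _).2 (by rw [hN1]; exact hS1),
        (corr _).2 (by rw [hN2]; exact hS2), ?_, ?_, ?_, ?_⟩
      · apply NQ_inj
        rw [← NQ_Qsub, ← NQ_Qsub, hN1, hN2, h3]
      · have := h4
        rw [← hN1, NQ_Qsub, NQ_card] at this
        exact this
      · have := h4
        rw [h3, ← hN2, NQ_Qsub, NQ_card] at this
        exact this
      · apply Finset.image_injective (Fin.val_injective)
        rw [← NQ_prY, ← NQ_prY, hN1, hN2, h5]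
    · exact Prod.ext (NQ_liftQ QQ'.1 (SHQP_bounds hS1)) (NQ_liftQ QQ'.2 (SHQP_bounds hS2))
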